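/- Let X be a CAT(0) space. If for every closed ball B_r(x) in X the subspace topology induced by the coconvex topology T_co on B_r(x) is Hausdorff, then the topologies T_co and T_Δ coincide on all bounded subsets of X (for every bounded subset the two subspace topologies agree). -/

import Mathlib

open Filter Topology Metric Set

/-- `m` is a midpoint of `x` and `y`. -/
def IsMidpoint {X : Type*} [MetricSpace X] (x y m : X) : Prop :=
  dist x m = dist x y / 2 ∧ dist y m = dist x y / 2

/-- A CAT(0) space: a complete metric space with midpoints satisfying the
CN-inequality of Bruhat–Tits. -/
def IsCAT0 (X : Type*) [MetricSpace X] : Prop :=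
  CompleteSpace X ∧
    (∀ x y : X, ∃ m : X, IsMidpoint x y m) ∧
    (∀ x y z m : X, IsMidpoint x y m →
      dist z m ^ 2 ≤ dist z x ^ 2 / 2 + dist z y ^ 2 / 2 - dist x y ^ 2 / 4)

/-- `G` is a (compact) geodesic segment starting at `x`: the image of an
isometric embedding of a compact interval `[0, L]` whose left endpoint is
mapped to `x`. -/
def IsGeodesicSegmentFrom {X : Type*} [MetricSpace X] (x : X) (G : Set X) : Prop :=
  ∃ (L : ℝ) (γ : ℝ → X), 0 ≤ L ∧ γ 0 = x ∧
    (∀ s ∈ Icc (0:ℝ) L, ∀ t ∈ Icc (0:ℝ) L, dist (γ s) (γ t) = |s - t|) ∧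
    G = γ '' Icc (0:ℝ) L

/-- `G` is a geodesic segment from `x` to `y`. -/
def IsGeodesicSegmentBetween {X : Type*} [MetricSpace X] (x y : X) (G : Set X) : Prop :=
  ∃ γ : ℝ → X, γ 0 = x ∧ γ (dist x y) = y ∧
    (∀ s ∈ Icc (0:ℝ) (dist x y), ∀ t ∈ Icc (0:ℝ) (dist x y),
      dist (γ s) (γ t) = |s - t|) ∧
    G = γ '' Icc (0:ℝ) (dist x y)

/-- `p` is a nearest point of `C` to `z` (a closest-point projection of `z`
onto `C`). -/
def IsNearestPoint {X : Type*} [MetricSpace X] (z : X) (C : Set X) (p : X) : Prop :=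
  p ∈ C ∧ ∀ q ∈ C, dist z p ≤ dist z q

/-- Weak (Δ-)convergence of a net `u` (indexed by a preordered set) to `x`:
for every geodesic segment `G` starting at `x`, the closest-point projections
of the `u i` onto `G` converge to `x` in the metric. -/
def WeakConv {X : Type*} [MetricSpace X] {I : Type*} [Preorder I]
    (u : I → X) (x : X) : Prop :=
  ∀ G : Set X, IsGeodesicSegmentFrom x G →
    ∀ p : I → X, (∀ i, IsNearestPoint (u i) G (p i)) → Tendsto p atTop (𝓝 x)

/-- The sets that are closed in the weak topology `T_Δ`: sets containing all
weak limits of bounded sequences of their elements. -/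
def TdeltaClosed {X : Type*} [MetricSpace X] (A : Set X) : Prop :=
  ∀ u : ℕ → X, (∀ n, u n ∈ A) → Bornology.IsBounded (Set.range u) →
    ∀ x : X, WeakConv u x → x ∈ A

/-- `T` is the weak topology `T_Δ`: its closed sets are exactly the weakly
sequentially closed sets. -/
def IsWeakTopology {X : Type*} [MetricSpace X] (T : TopologicalSpace X) : Prop :=
  ∀ A : Set X, @IsClosed X T A ↔ TdeltaClosed A

/-- Geodesic convexity of a subset of a metric space. -/
def GeodesicallyConvex {X : Type*} [MetricSpace X] (C : Set X) : Prop :=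
  ∀ x ∈ C, ∀ y ∈ C, ∀ G : Set X, IsGeodesicSegmentBetween x y G → G ⊆ C

/-- The coconvex topology `T_co`: the coarsest topology on `X` in which every
metrically closed, (geodesically) convex set is closed. -/
def coconvexTopology (X : Type*) [MetricSpace X] : TopologicalSpace X :=
  TopologicalSpace.generateFrom
    {U : Set X | ∃ C : Set X, IsClosed C ∧ GeodesicallyConvex C ∧ U = Cᶜ}

namespace CAT0P

variable {X : Type*} [MetricSpace X]

theorem isMidpoint_symm {x y m : X} (h : IsMidpoint x y m) : IsMidpoint y x m :=
  ⟨by rw [dist_comm y x]; exact h.2, by rw [dist_comm y x]; exact h.1⟩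

theorem midpoint_unique (hX : IsCAT0 X) {x y m m' : X}
    (h : IsMidpoint x y m) (h' : IsMidpoint x y m') : m = m' := by
  have hcn := hX.2.2 x y m' m h
  have h1 : dist m' x = dist x y / 2 := by rw [dist_comm]; exact h'.1
  have h2 : dist m' y = dist x y / 2 := by rw [dist_comm]; exact h'.2
  have : dist m' m ^ 2 ≤ 0 := by rw [h1, h2] at hcn; nlinarith
  have h0 : dist m' m = 0 := le_antisymm (by nlinarith [dist_nonneg (x := m') (y := m)]) dist_nonneg
  exact (dist_eq_zero.mp (by rw [dist_comm] at h0; exact h0))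

/-- midpoint choice function -/
noncomputable def md (hX : IsCAT0 X) (a b : X) : X := (hX.2.1 a b).choose

theorem md_spec (hX : IsCAT0 X) (a b : X) : IsMidpoint a b (md hX a b) :=
  (hX.2.1 a b).choose_spec

theorem dist_midpoint_far (hX : IsCAT0 X) {a b m z : X} (hm : IsMidpoint a b m)
    (h : dist z b = dist z a + dist a b) :
    dist z m = dist z a + dist a b / 2 := by
  have hcn := hX.2.2 a b z m hm
  rw [h] at hcn
  have hsq : dist z m ^ 2 ≤ (dist z a + dist a b / 2) ^ 2 := by nlinarith [hcn]
  have h1 : dist z m ≤ dist z a + dist a b / 2 := by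
    nlinarith [dist_nonneg (x := z) (y := m), dist_nonneg (x := z) (y := a),
      dist_nonneg (x := a) (y := b)]
  have h2 : dist z b ≤ dist z m + dist m b := dist_triangle z m b
  have h3 : dist m b = dist a b / 2 := by rw [dist_comm]; exact hm.2
  linarith

/-- dyadic grid -/
noncomputable def gg (hX : IsCAT0 X) (x y : X) : ℕ → ℕ → X
  | 0, k => if k = 0 then x else y
  | (n+1), k => if k % 2 = 0 then gg hX x y n (k / 2)
      else md hX (gg hX x y n (k / 2)) (gg hX x y n (k / 2 + 1))

variable (hX : IsCAT0 X) (x y : X)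

theorem gg_even (n k : ℕ) : gg hX x y (n+1) (2*k) = gg hX x y n k := by
  have h1 : (2*k) % 2 = 0 := by omega
  have h2 : (2*k) / 2 = k := by omega
  simp [gg, h1, h2]

theorem gg_odd (n k : ℕ) :
    gg hX x y (n+1) (2*k+1) = md hX (gg hX x y n k) (gg hX x y n (k+1)) := by
  have h1 : (2*k+1) % 2 = 1 := by omega
  have h2 : (2*k+1) / 2 = k := by omega
  simp [gg, h1, h2]

theorem gg_dist : ∀ n k l, k ≤ l → l ≤ 2^n →
    dist (gg hX x y n k) (gg hX x y n l) = ((l : ℝ) - k) / 2^n * dist x y := by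
  intro n
  induction n with
  | zero =>
    intro k l hkl hl
    simp only [pow_zero] at hl
    interval_cases l
    · interval_cases k
      · simp [gg]
    · interval_cases k
      · show dist (gg hX x y 0 0) (gg hX x y 0 1) = _
        simp [gg]
      · simp [gg]
  | succ n ih =>
    have hD : (0:ℝ) ≤ dist x y := dist_nonneg
    have hpow : (0:ℝ) < 2^n := by positivity
    have hstep : ∀ j, j + 1 ≤ 2^n →
        dist (gg hX x y n j) (gg hX x y n (j+1)) = dist x y / 2^n := by
      intro j hj
      rw [ih j (j+1) (by omega) hj]
      push_cast; ring
    -- even-odd: dist (gg n i) (md (gg n j) (gg n (j+1))) for i ≤ j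
    have evenodd : ∀ i j, i ≤ j → j + 1 ≤ 2^n →
        dist (gg hX x y n i) (md hX (gg hX x y n j) (gg hX x y n (j+1)))
          = ((2*j+1 : ℝ) - 2*i) / 2^(n+1) * dist x y := by
      intro i j hij hj
      have hA := ih i j hij (by omega)
      have hB := ih i (j+1) (by omega) hj
      have hC := hstep j hj
      have hfar : dist (gg hX x y n i) (gg hX x y n (j+1))
          = dist (gg hX x y n i) (gg hX x y n j)
            + dist (gg hX x y n j) (gg hX x y n (j+1)) := by
        rw [hA, hB, hC]; push_cast; field_simp; ring
      have := dist_midpoint_far hX (md_spec hX _ _) hfar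
      rw [this, hA, hC]; push_cast; field_simp; ring
    -- odd-even: dist (md (gg n i) (gg n (i+1))) (gg n j) for i < j
    have oddeven : ∀ i j, i + 1 ≤ j → j ≤ 2^n →
        dist (md hX (gg hX x y n i) (gg hX x y n (i+1))) (gg hX x y n j)
          = ((2*j : ℝ) - (2*i+1)) / 2^(n+1) * dist x y := by
      intro i j hij hj
      have hA := ih (i+1) j hij hj
      have hB := ih i j (by omega) hj
      have hC := hstep i (by omega)
      -- z := gg n j ; midpoint of (gg n (i+1), gg n i) after symm
      have hfar : dist (gg hX x y n j) (gg hX x y n i)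
          = dist (gg hX x y n j) (gg hX x y n (i+1))
            + dist (gg hX x y n (i+1)) (gg hX x y n i) := by
        rw [dist_comm (gg hX x y n j) (gg hX x y n i),
          dist_comm (gg hX x y n j) (gg hX x y n (i+1)),
          dist_comm (gg hX x y n (i+1)) (gg hX x y n i), hA, hB, hC]
        push_cast; field_simp; ring
      have hmid : IsMidpoint (gg hX x y n (i+1)) (gg hX x y n i)
          (md hX (gg hX x y n i) (gg hX x y n (i+1))) :=
        isMidpoint_symm (md_spec hX _ _)
      have := dist_midpoint_far hX hmid hfar
      rw [dist_comm]
      rw [this, dist_comm (gg hX x y n j) (gg hX x y n (i+1)), hA,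
        dist_comm (gg hX x y n (i+1)) (gg hX x y n i), hC]
      push_cast; field_simp; ring
    intro k l hkl hl
    obtain ⟨i, hi⟩ : ∃ i, k = 2*i ∨ k = 2*i+1 := ⟨k/2, by omega⟩
    obtain ⟨j, hj⟩ : ∃ j, l = 2*j ∨ l = 2*j+1 := ⟨l/2, by omega⟩
    rcases hi with hi | hi <;> rcases hj with hj | hj <;> subst hi <;> subst hj
    · -- even even
      rw [gg_even, gg_even, ih i j (by omega) (by omega)]
      push_cast; field_simp; ring
    · -- even odd
      rw [gg_even, gg_odd]
      rw [evenodd i j (by omega) (by omega)]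
      push_cast; ring
    · -- odd even
      rw [gg_odd, gg_even]
      rw [oddeven i j (by omega) (by omega)]
      push_cast; ring
    · -- odd odd
      rcases Nat.eq_or_lt_of_le (show i ≤ j by omega) with hij | hij
      · subst hij; simp
      · rw [gg_odd, gg_odd]
        have hA := oddeven i j hij (by omega)
        have hB := oddeven i (j+1) (by omega) (by omega)
        have hC := hstep j (by omega)
        have hfar : dist (md hX (gg hX x y n i) (gg hX x y n (i+1))) (gg hX x y n (j+1))
            = dist (md hX (gg hX x y n i) (gg hX x y n (i+1))) (gg hX x y n j)
              + dist (gg hX x y n j) (gg hX x y n (j+1)) := by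
          rw [hA, hB, hC]; push_cast; field_simp; ring
        have := dist_midpoint_far hX (md_spec hX (gg hX x y n j) (gg hX x y n (j+1))) hfar
        rw [this, hA, hC]
        push_cast; field_simp; ring

theorem gg_zero : ∀ n, gg hX x y n 0 = x := by
  intro n; induction n with
  | zero => simp [gg]
  | succ n ih => have := gg_even hX x y n 0; simpa using this.trans ih

theorem gg_top : ∀ n, gg hX x y n (2^n) = y := by
  intro n; induction n with
  | zero => simp [gg]
  | succ n ih =>
    have h : 2^(n+1) = 2 * 2^n := by ring
    rw [h, gg_even hX x y n (2^n), ih]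

end CAT0P
namespace CAT0P
variable {X : Type*} [MetricSpace X]

theorem gg_dist' (hX : IsCAT0 X) (x y : X) {n k l : ℕ} (hk : k ≤ 2^n) (hl : l ≤ 2^n) :
    dist (gg hX x y n k) (gg hX x y n l) = |(k : ℝ) - l| / 2^n * dist x y := by
  rcases le_total k l with h | h
  · rw [gg_dist hX x y n k l h hl, abs_sub_comm]
    rw [abs_of_nonneg (by linarith [(Nat.cast_le (α := ℝ)).mpr h] : (0:ℝ) ≤ (l:ℝ) - k)]
  · rw [dist_comm, gg_dist hX x y n l k h hk]
    rw [abs_of_nonneg (by linarith [(Nat.cast_le (α := ℝ)).mpr h] : (0:ℝ) ≤ (k:ℝ) - l)]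

theorem exists_geodesic (hX : IsCAT0 X) (x y : X) :
    ∃ γ : ℝ → X, γ 0 = x ∧ γ (dist x y) = y ∧
      ∀ s ∈ Icc (0:ℝ) (dist x y), ∀ t ∈ Icc (0:ℝ) (dist x y), dist (γ s) (γ t) = |s - t| := by
  haveI : CompleteSpace X := hX.1
  rcases eq_or_lt_of_le (dist_nonneg : (0:ℝ) ≤ dist x y) with h0 | hpos
  · have hxy : x = y := dist_eq_zero.mp h0.symm
    refine ⟨fun _ => x, rfl, hxy, ?_⟩
    intro s hs t ht
    rw [← h0] at hs ht
    have hs0 : s = 0 := le_antisymm hs.2 hs.1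
    have ht0 : t = 0 := le_antisymm ht.2 ht.1
    simp [hs0, ht0]
  · set D := dist x y with hDdef
    set kn : ℝ → ℕ → ℕ := fun t n => ⌊(t / D) * 2^n⌋₊ with hkn
    set sf : ℝ → ℕ → X := fun t n => gg hX x y n (kn t n) with hsf
    have hknle : ∀ t, t ∈ Icc (0:ℝ) D → ∀ n, kn t n ≤ 2^n := by
      intro t ht n
      have h1 : (t / D) * 2^n ≤ ((2^n : ℕ) : ℝ) := by
        push_cast
        have h2 : t / D ≤ 1 := (div_le_one hpos).mpr ht.2
        nlinarith [pow_pos (show (0:ℝ) < 2 by norm_num) n]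
      calc kn t n ≤ ⌊((2^n : ℕ) : ℝ)⌋₊ := Nat.floor_le_floor h1
        _ = 2^n := Nat.floor_natCast _
    have hfl : ∀ t, t ∈ Icc (0:ℝ) D → ∀ n,
        (t / D) * 2^n - 1 < (kn t n : ℝ) ∧ (kn t n : ℝ) ≤ (t / D) * 2^n := by
      intro t ht n
      have hdn : 0 ≤ t / D := div_nonneg ht.1 hpos.le
      have hnn : 0 ≤ (t / D) * 2^n := by positivity
      exact ⟨by linarith [Nat.lt_floor_add_one ((t / D) * 2^n)], Nat.floor_le hnn⟩
    have hcauchy : ∀ t, t ∈ Icc (0:ℝ) D → CauchySeq (sf t) := by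
      intro t ht
      apply cauchySeq_of_le_geometric (1/2 : ℝ) D (by norm_num)
      intro n
      have hk1 : 2 * kn t n ≤ 2^(n+1) := by
        have := hknle t ht n
        have h2 : (2:ℕ)^(n+1) = 2 * 2^n := by ring
        omega
      have hk2 : kn t (n+1) ≤ 2^(n+1) := hknle t ht (n+1)
      have hrw : sf t n = gg hX x y (n+1) (2 * kn t n) := by
        rw [hsf]; exact (gg_even hX x y n (kn t n)).symm
      have hd : dist (sf t n) (sf t (n+1))
          = |((2 * kn t n : ℕ) : ℝ) - (kn t (n+1) : ℕ)| / 2^(n+1) * D := by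
        rw [hrw]
        exact gg_dist' hX x y hk1 hk2
      have habs : |((2 * kn t n : ℕ) : ℝ) - (kn t (n+1) : ℕ)| ≤ 2 := by
        have h1 := hfl t ht n
        have h2 := hfl t ht (n+1)
        have hps : ((2:ℝ))^(n+1) = 2^n * 2 := by ring
        rw [hps] at h2
        rw [abs_le]
        push_cast
        constructor <;> nlinarith [h1.1, h1.2, h2.1, h2.2]
      rw [hd]
      have hp : (0:ℝ) < 2^(n+1) := by positivity
      calc |((2 * kn t n : ℕ) : ℝ) - (kn t (n+1) : ℕ)| / 2^(n+1) * D
          ≤ 2 / 2^(n+1) * D := by gcongr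
        _ = D * (1/2)^n := by rw [one_div, inv_pow, pow_succ]; field_simp
    have hex : ∀ t : ℝ, ∃ p : X, t ∈ Icc (0:ℝ) D → Tendsto (sf t) atTop (𝓝 p) := by
      intro t
      by_cases ht : t ∈ Icc (0:ℝ) D
      · obtain ⟨p, hp⟩ := cauchySeq_tendsto_of_complete (hcauchy t ht)
        exact ⟨p, fun _ => hp⟩
      · exact ⟨x, fun h => absurd h ht⟩
    choose γ hγ using hex
    have hratio : ∀ t, t ∈ Icc (0:ℝ) D →
        Tendsto (fun n => (kn t n : ℝ) / 2^n) atTop (𝓝 (t / D)) := by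
      intro t ht
      have hup : ∀ n, (kn t n : ℝ)/2^n ≤ t/D := by
        intro n
        rw [div_le_iff₀ (by positivity : (0:ℝ) < 2^n)]
        exact (hfl t ht n).2
      have hlo : ∀ n, t/D - (1/2)^n ≤ (kn t n : ℝ)/2^n := by
        intro n
        rw [le_div_iff₀ (by positivity : (0:ℝ) < 2^n)]
        have := (hfl t ht n).1
        have hpn : ((1:ℝ)/2)^n * 2^n = 1 := by
          rw [div_pow, one_pow, div_mul_cancel₀]
          positivity
        nlinarith
      have hl : Tendsto (fun n : ℕ => t/D - (1/2:ℝ)^n) atTop (𝓝 (t/D)) := by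
        have : Tendsto (fun n : ℕ => ((1:ℝ)/2)^n) atTop (𝓝 0) :=
          tendsto_pow_atTop_nhds_zero_of_lt_one (by norm_num) (by norm_num)
        simpa using tendsto_const_nhds.sub this
      exact tendsto_of_tendsto_of_tendsto_of_le_of_le hl tendsto_const_nhds hlo hup
    have hdist : ∀ s t, s ∈ Icc (0:ℝ) D → t ∈ Icc (0:ℝ) D → ∀ n,
        dist (sf s n) (sf t n) = |(kn s n : ℝ)/2^n - (kn t n : ℝ)/2^n| * D := by
      intro s t hs ht n
      have h1 : dist (sf s n) (sf t n) = |(kn s n : ℝ) - kn t n| / 2^n * D :=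
        gg_dist' hX x y (hknle s hs n) (hknle t ht n)
      rw [h1]
      have h2 : (kn s n : ℝ)/2^n - (kn t n : ℝ)/2^n = ((kn s n : ℝ) - kn t n)/2^n := by
        ring
      rw [h2, abs_div, abs_of_pos (by positivity : (0:ℝ) < (2:ℝ)^n)]
    refine ⟨γ, ?_, ?_, ?_⟩
    · have h0m : (0:ℝ) ∈ Icc (0:ℝ) D := ⟨le_refl _, hpos.le⟩
      have hc : ∀ n, sf 0 n = x := by
        intro n
        have hk0 : kn 0 n = 0 := by simp [hkn]
        rw [hsf]
        simp only [hk0]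
        exact gg_zero hX x y n
      refine tendsto_nhds_unique (hγ 0 h0m) ?_
      rw [tendsto_congr hc]
      exact tendsto_const_nhds
    · have hDm : D ∈ Icc (0:ℝ) D := ⟨hpos.le, le_refl _⟩
      have hc : ∀ n, sf D n = y := by
        intro n
        have hk0 : kn D n = 2^n := by
          have : D / D = 1 := div_self hpos.ne'
          simp only [hkn, this, one_mul]
          rw [show ((2:ℝ)^n) = ((2^n : ℕ) : ℝ) by push_cast; ring]
          exact Nat.floor_natCast _
        rw [hsf]
        simp only [hk0]
        exact gg_top hX x y n
      refine tendsto_nhds_unique (hγ D hDm) ?_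
      rw [tendsto_congr hc]
      exact tendsto_const_nhds
    · intro s hs t ht
      have h1 : Tendsto (fun n => dist (sf s n) (sf t n)) atTop (𝓝 (dist (γ s) (γ t))) :=
        (hγ s hs).dist (hγ t ht)
      have h2 : Tendsto (fun n => dist (sf s n) (sf t n)) atTop (𝓝 (|s - t|)) := by
        rw [tendsto_congr (hdist s t hs ht)]
        have h3 : Tendsto (fun n => |(kn s n : ℝ)/2^n - (kn t n : ℝ)/2^n| * D) atTop
            (𝓝 (|s/D - t/D| * D)) :=
          (((hratio s hs).sub (hratio t ht)).abs).mul_const D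
        have h4 : |s/D - t/D| * D = |s - t| := by
          rw [show s/D - t/D = (s-t)/D by ring, abs_div, abs_of_pos hpos,
            div_mul_cancel₀ _ hpos.ne']
        rwa [h4] at h3
      exact tendsto_nhds_unique h1 h2

end CAT0P
namespace CAT0P
variable {X : Type*} [MetricSpace X]

def MidEx (S : Set X) : Prop := ∀ a ∈ S, ∀ b ∈ S, ∃ m, IsMidpoint a b m ∧ m ∈ S

theorem midEx_closedBall (hX : IsCAT0 X) (c : X) (r : ℝ) : MidEx (closedBall c r) := by
  intro a ha b hb
  refine ⟨md hX a b, md_spec hX a b, ?_⟩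
  have hcn := hX.2.2 a b c (md hX a b) (md_spec hX a b)
  rw [mem_closedBall] at ha hb ⊢
  rw [dist_comm] at ha hb
  have hr : 0 ≤ r := le_trans dist_nonneg ha
  have : dist c (md hX a b) ^ 2 ≤ r ^ 2 := by
    nlinarith [dist_nonneg (x := a) (y := b), dist_nonneg (x := c) (y := a),
      dist_nonneg (x := c) (y := b)]
  rw [dist_comm]
  nlinarith [dist_nonneg (x := c) (y := md hX a b)]

theorem midEx_inter (hX : IsCAT0 X) {S T : Set X} (hS : MidEx S) (hT : MidEx T) :
    MidEx (S ∩ T) := by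
  intro a ha b hb
  obtain ⟨m1, hm1, hm1S⟩ := hS a ha.1 b hb.1
  obtain ⟨m2, hm2, hm2T⟩ := hT a ha.2 b hb.2
  exact ⟨m1, hm1, hm1S, midpoint_unique hX hm1 hm2 ▸ hm2T⟩

theorem GeodesicallyConvex.midEx (hX : IsCAT0 X) {C : Set X} (hC : GeodesicallyConvex C) :
    MidEx C := by
  intro a ha b hb
  obtain ⟨γ, hγ0, hγL, hiso⟩ := exists_geodesic hX a b
  set d := dist a b with hd
  have hd0 : 0 ≤ d := dist_nonneg
  have hbet : IsGeodesicSegmentBetween a b (γ '' Icc (0:ℝ) d) := ⟨γ, hγ0, hγL, hiso, rfl⟩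
  have hsub := hC a ha b hb _ hbet
  have hmem : γ (d/2) ∈ γ '' Icc (0:ℝ) d := ⟨d/2, ⟨by linarith, by linarith⟩, rfl⟩
  refine ⟨γ (d/2), ⟨?_, ?_⟩, hsub hmem⟩
  · have := hiso 0 ⟨le_refl _, hd0⟩ (d/2) ⟨by linarith, by linarith⟩
    rw [hγ0] at this
    rw [this, abs_of_nonpos (by linarith)]
    ring
  · have := hiso d ⟨hd0, le_refl _⟩ (d/2) ⟨by linarith, by linarith⟩
    rw [hγL] at this
    rw [this, abs_of_nonneg (by linarith)]
    ring

theorem min_exists (hX : IsCAT0 X) {S : Set X} (hne : S.Nonempty) (hcl : IsClosed S)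
    (hmid : MidEx S) {g : X → ℝ} (hgc : Continuous g) (hg0 : ∀ z ∈ S, 0 ≤ g z)
    (hconv : ∀ a ∈ S, ∀ b ∈ S, ∀ m, IsMidpoint a b m →
      g m ≤ g a / 2 + g b / 2 - dist a b ^ 2 / 4) :
    ∃ p ∈ S, ∀ q ∈ S, g p ≤ g q := by
  haveI : CompleteSpace X := hX.1
  set ι := sInf (g '' S) with hι
  have hbdd : BddBelow (g '' S) := ⟨0, by rintro _ ⟨z, hz, rfl⟩; exact hg0 z hz⟩
  have hlow : ∀ q ∈ S, ι ≤ g q := fun q hq => csInf_le hbdd (mem_image_of_mem g hq)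
  have hseq : ∀ k : ℕ, ∃ z, z ∈ S ∧ g z < ι + 1/(k+1) := by
    intro k
    have h1 : ι < ι + 1/(k+1) := by
      have : (0:ℝ) < 1/(k+1) := by positivity
      linarith
    obtain ⟨w, hw, hw2⟩ := exists_lt_of_csInf_lt (hne.image g) h1
    obtain ⟨z, hz, rfl⟩ := hw
    exact ⟨z, hz, hw2⟩
  choose u huS hulow using hseq
  have hdist2 : ∀ n m : ℕ, dist (u n) (u m) ^ 2 ≤ 2*(1/(n+1)) + 2*(1/(m+1)) := by
    intro n m
    obtain ⟨w, hw, hwS⟩ := hmid (u n) (huS n) (u m) (huS m)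
    have h1 := hconv (u n) (huS n) (u m) (huS m) w hw
    have h2 := hlow w hwS
    have h3 := hulow n
    have h4 := hulow m
    linarith
  have hcs : CauchySeq u := by
    apply cauchySeq_of_le_tendsto_0 (fun N : ℕ => Real.sqrt (4*(1/(N+1))))
    · intro n m N hn hm
      have h1 : dist (u n) (u m) ^ 2 ≤ 4*(1/(N+1)) := by
        have e1 : (1:ℝ)/(n+1) ≤ 1/(N+1) := by
          apply one_div_le_one_div_of_le (by positivity)
          push_cast; linarith [(Nat.cast_le (α := ℝ)).mpr hn]
        have e2 : (1:ℝ)/(m+1) ≤ 1/(N+1) := by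
          apply one_div_le_one_div_of_le (by positivity)
          push_cast; linarith [(Nat.cast_le (α := ℝ)).mpr hm]
        have := hdist2 n m
        linarith
      calc dist (u n) (u m) = Real.sqrt (dist (u n) (u m) ^ 2) :=
            (Real.sqrt_sq dist_nonneg).symm
        _ ≤ Real.sqrt (4*(1/(N+1))) := Real.sqrt_le_sqrt h1
    · have h0 : Tendsto (fun N : ℕ => 4*(1/((N:ℝ)+1))) atTop (𝓝 0) := by
        have := tendsto_one_div_add_atTop_nhds_zero_nat (𝕜 := ℝ)
        have h4 := this.const_mul (4:ℝ)
        simpa using h4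
      have h1 := (Real.continuous_sqrt.tendsto 0).comp h0
      rw [Real.sqrt_zero] at h1
      exact h1
  obtain ⟨p, hp⟩ := cauchySeq_tendsto_of_complete hcs
  have hpS : p ∈ S := hcl.mem_of_tendsto hp (Filter.Eventually.of_forall huS)
  refine ⟨p, hpS, fun q hq => le_trans ?_ (hlow q hq)⟩
  have h1 : Tendsto (fun k => g (u k)) atTop (𝓝 (g p)) := (hgc.tendsto p).comp hp
  have h2 : Tendsto (fun k : ℕ => ι + 1/((k:ℝ)+1)) atTop (𝓝 ι) := by
    have := tendsto_one_div_add_atTop_nhds_zero_nat (𝕜 := ℝ)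
    simpa using tendsto_const_nhds.add this
  exact le_of_tendsto_of_tendsto' h1 h2 (fun k => (hulow k).le)

theorem exists_nearest (hX : IsCAT0 X) {S : Set X} (hne : S.Nonempty) (hcl : IsClosed S)
    (hmid : MidEx S) (z : X) : ∃ p, IsNearestPoint z S p := by
  obtain ⟨p, hpS, hmin⟩ := min_exists hX hne hcl hmid
    (g := fun w => dist z w ^ 2) ((continuous_const.dist continuous_id).pow 2)
    (fun w _ => by positivity)
    (fun a _ b _ m hm => hX.2.2 a b z m hm)
  refine ⟨p, hpS, fun q hq => ?_⟩
  have := hmin q hq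
  nlinarith [dist_nonneg (x := z) (y := p), dist_nonneg (x := z) (y := q)]

theorem nearest_obtuse (hX : IsCAT0 X) {S : Set X} (hmid : MidEx S) {z p : X}
    (hp : IsNearestPoint z S p) :
    ∀ c ∈ S, dist z p ^ 2 + dist p c ^ 2 ≤ dist z c ^ 2 := by
  have key : ∀ n : ℕ, ∀ c ∈ S,
      dist z p ^ 2 + (1 - (1/2:ℝ)^n) * dist p c ^ 2 ≤ dist z c ^ 2 := by
    intro n
    induction n with
    | zero =>
      intro c hc
      have := hp.2 c hc
      nlinarith [dist_nonneg (x := z) (y := p), dist_nonneg (x := z) (y := c)]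
    | succ n ih =>
      intro c hc
      obtain ⟨m, hm, hmS⟩ := hmid p hp.1 c hc
      have h1 := ih m hmS
      have h2 : dist p m = dist p c / 2 := hm.1
      have h3 := hX.2.2 p c z m hm
      have h2' : dist p m ^ 2 = dist p c ^ 2 / 4 := by rw [h2]; ring
      rw [h2'] at h1
      have h4' : ((1:ℝ)/2)^(n+1) * dist p c ^ 2 = (1/2:ℝ)^n * dist p c ^ 2 / 2 := by ring
      nlinarith [h1, h3, h4']
  intro c hc
  have h1 : Tendsto (fun n : ℕ => dist z p ^ 2 + (1 - (1/2:ℝ)^n) * dist p c ^ 2) atTop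
      (𝓝 (dist z p ^ 2 + dist p c ^ 2)) := by
    have h0 : Tendsto (fun n : ℕ => ((1:ℝ)/2)^n) atTop (𝓝 0) :=
      tendsto_pow_atTop_nhds_zero_of_lt_one (by norm_num) (by norm_num)
    have h2 : Tendsto (fun n : ℕ => dist z p ^ 2 + (1 - (1/2:ℝ)^n) * dist p c ^ 2) atTop
        (𝓝 (dist z p ^ 2 + (1 - 0) * dist p c ^ 2)) :=
      Tendsto.add tendsto_const_nhds
        (Tendsto.mul_const _ (Tendsto.sub tendsto_const_nhds h0))
    simpa using h2
  exact le_of_tendsto_of_tendsto' h1 tendsto_const_nhds (fun n => key n c hc)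

theorem tdeltaClosed_of_closed_midEx (hX : IsCAT0 X) {C : Set X} (hcl : IsClosed C)
    (hmid : MidEx C) : TdeltaClosed C := by
  intro u hu _hb x hw
  have hne : C.Nonempty := ⟨u 0, hu 0⟩
  obtain ⟨p, hp⟩ := exists_nearest hX hne hcl hmid x
  obtain ⟨γ, hγ0, hγL, hiso⟩ := exists_geodesic hX x p
  set L := dist x p with hL
  set G := γ '' Icc (0:ℝ) L with hG
  have hGfrom : IsGeodesicSegmentFrom x G := ⟨L, γ, dist_nonneg, hγ0, hiso, rfl⟩
  have hpG : p ∈ G := ⟨L, ⟨dist_nonneg, le_refl _⟩, hγL⟩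
  have hnear : ∀ i, IsNearestPoint (u i) G p := by
    intro i
    refine ⟨hpG, ?_⟩
    rintro q ⟨t, htI, rfl⟩
    have h1 : dist (γ t) p = L - t := by
      have h := hiso t htI L ⟨dist_nonneg, le_refl _⟩
      rw [hγL] at h
      rw [h, abs_of_nonpos (by linarith [htI.2])]
      ring
    have h2 : dist x (γ t) = t := by
      have h := hiso 0 ⟨le_refl _, dist_nonneg⟩ t htI
      rw [hγ0] at h
      rw [h, abs_of_nonpos (by linarith [htI.1])]
      ring
    have h3 : IsNearestPoint (γ t) C p := by
      refine ⟨hp.1, fun c hc => ?_⟩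
      have h4 := dist_triangle x (γ t) c
      have h5 := hp.2 c hc
      rw [h1]
      linarith
    have h6 := nearest_obtuse hX hmid h3 (u i) (hu i)
    have h7 : dist p (u i) ≤ dist (γ t) (u i) := by
      nlinarith [dist_nonneg (x := p) (y := u i), dist_nonneg (x := γ t) (y := u i),
        dist_nonneg (x := γ t) (y := p)]
    rw [dist_comm (u i) p, dist_comm (u i) (γ t)]
    exact h7
  have htd := hw G hGfrom (fun _ => p) hnear
  have hpx : x = p := tendsto_nhds_unique htd tendsto_const_nhds
  rw [hpx]
  exact hp.1

end CAT0P
namespace CAT0P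
variable {X : Type*} [MetricSpace X]

theorem segFrom_mem {x : X} {G : Set X} (hG : IsGeodesicSegmentFrom x G) : x ∈ G := by
  obtain ⟨L, γ, hL, hγ0, _, rfl⟩ := hG
  exact ⟨0, ⟨le_refl _, hL⟩, hγ0⟩

theorem segFrom_compact {x : X} {G : Set X} (hG : IsGeodesicSegmentFrom x G) :
    IsCompact G := by
  obtain ⟨L, γ, hL, hγ0, hiso, rfl⟩ := hG
  refine isCompact_Icc.image_of_continuousOn ?_
  refine LipschitzOnWith.continuousOn (K := 1) (LipschitzOnWith.of_dist_le_mul ?_)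
  intro s hs t ht
  rw [hiso s hs t ht, Real.dist_eq]
  simp

theorem segFrom_midEx {x : X} {G : Set X} (hG : IsGeodesicSegmentFrom x G) : MidEx G := by
  obtain ⟨L, γ, hL, hγ0, hiso, rfl⟩ := hG
  rintro a ⟨s, hs, rfl⟩ b ⟨t, ht, rfl⟩
  have hmI : (s+t)/2 ∈ Icc (0:ℝ) L := ⟨by linarith [hs.1, ht.1], by linarith [hs.2, ht.2]⟩
  refine ⟨γ ((s+t)/2), ⟨?_, ?_⟩, ⟨(s+t)/2, hmI, rfl⟩⟩
  · rw [hiso s hs ((s+t)/2) hmI, hiso s hs t ht]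
    rw [show s - (s+t)/2 = (s-t)/2 by ring, abs_div]
    norm_num
  · rw [hiso t ht ((s+t)/2) hmI, hiso s hs t ht]
    rw [show t - (s+t)/2 = -((s-t)/2) by ring, abs_neg, abs_div]
    rw [abs_sub_comm s t]
    norm_num

/-- one-endpoint midpoint perturbation estimate -/
theorem midpoint_perturb (hX : IsCAT0 X) {a b b' m m' : X} (hm : IsMidpoint a b m)
    (hm' : IsMidpoint a b' m') {R : ℝ} (hab : dist a b ≤ 2*R) (hab' : dist a b' ≤ 2*R) :
    dist m m' ≤ Real.sqrt (4 * R * dist b b') := by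
  have hcn := hX.2.2 a b m' m hm
  have h1 : dist m' a = dist a b' / 2 := by rw [dist_comm]; exact hm'.1
  have h2 : dist m' b ≤ dist a b' / 2 + dist b' b := by
    have := dist_triangle m' b' b
    have h3 : dist m' b' = dist a b' / 2 := by rw [dist_comm]; exact hm'.2
    linarith
  have htr : dist a b' ≤ dist a b + dist b b' := dist_triangle a b b'
  have htr' : dist a b ≤ dist a b' + dist b b' := by
    have := dist_triangle a b' b
    rw [dist_comm b' b] at this
    exact this
  have hbb : dist b' b = dist b b' := dist_comm b' b
  have hR : 0 ≤ R := by nlinarith [dist_nonneg (x := a) (y := b)]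
  have htr2 : dist b b' ≤ dist a b' + dist a b := by
    have := dist_triangle b a b'
    rw [dist_comm b a] at this
    linarith
  have p1 : (dist a b' - dist a b) * (dist a b' + dist a b)
      ≤ dist b b' * (dist a b' + dist a b) := by
    apply mul_le_mul_of_nonneg_right (by linarith)
    positivity
  have p2 : dist b b' * (dist a b' + dist a b) ≤ dist b b' * (4*R) :=
    mul_le_mul_of_nonneg_left (by linarith) dist_nonneg
  have p3 : dist b b' * dist b b' ≤ dist b b' * (dist a b' + dist a b) :=
    mul_le_mul_of_nonneg_left htr2 dist_nonneg
  have p4 : dist a b' * dist b b' ≤ 2*R * dist b b' :=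
    mul_le_mul_of_nonneg_right hab' dist_nonneg
  have k1 : dist m' b ^ 2 ≤ (dist a b' / 2 + dist b' b)^2 := by
    nlinarith [dist_nonneg (x := m') (y := b), dist_nonneg (x := a) (y := b'),
      dist_nonneg (x := b') (y := b)]
  have hsq : dist m m' ^ 2 ≤ 4 * R * dist b b' := by
    rw [dist_comm m m']
    nlinarith [hcn, k1, p1, p2, p3, p4]
  calc dist m m' = Real.sqrt (dist m m' ^ 2) := (Real.sqrt_sq dist_nonneg).symm
    _ ≤ Real.sqrt (4 * R * dist b b') := Real.sqrt_le_sqrt hsq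

theorem midEx_closure (hX : IsCAT0 X) {S : Set X} {c : X} {R : ℝ}
    (hSb : S ⊆ closedBall c R) (hS : MidEx S) : MidEx (closure S) := by
  haveI : CompleteSpace X := hX.1
  intro a ha b hb
  obtain ⟨ak, hakS, hak⟩ := mem_closure_iff_seq_limit.mp ha
  obtain ⟨bk, hbkS, hbk⟩ := mem_closure_iff_seq_limit.mp hb
  choose mk hmk hmkS using fun k => hS (ak k) (hakS k) (bk k) (hbkS k)
  have hdd : ∀ (p q : X), p ∈ S → q ∈ S → dist p q ≤ 2*R := by
    intro p q hp hq
    have h1 := hSb hp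
    have h2 := hSb hq
    rw [mem_closedBall] at h1 h2
    calc dist p q ≤ dist p c + dist c q := dist_triangle p c q
      _ ≤ 2*R := by rw [dist_comm c q]; linarith
  have hbound : ∀ k j, dist (mk k) (mk j)
      ≤ Real.sqrt (4 * R * dist (bk k) (bk j)) + Real.sqrt (4 * R * dist (ak k) (ak j)) := by
    intro k j
    set w := md hX (ak k) (bk j) with hw
    have hwmid : IsMidpoint (ak k) (bk j) w := md_spec hX _ _
    have e1 : dist (mk k) w ≤ Real.sqrt (4 * R * dist (bk k) (bk j)) :=
      midpoint_perturb hX (hmk k) hwmid (hdd _ _ (hakS k) (hbkS k)) (hdd _ _ (hakS k) (hbkS j))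
    have e2 : dist w (mk j) ≤ Real.sqrt (4 * R * dist (ak k) (ak j)) := by
      have h1 : IsMidpoint (bk j) (ak k) w := isMidpoint_symm hwmid
      have h2 : IsMidpoint (bk j) (ak j) (mk j) := isMidpoint_symm (hmk j)
      have := midpoint_perturb hX h1 h2
        (by rw [dist_comm]; exact hdd _ _ (hakS k) (hbkS j))
        (by rw [dist_comm]; exact hdd _ _ (hakS j) (hbkS j))
      exact this
    calc dist (mk k) (mk j) ≤ dist (mk k) w + dist w (mk j) := dist_triangle _ _ _
      _ ≤ _ := add_le_add e1 e2
  have hR : 0 ≤ R := by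
    have := hSb (hakS 0)
    rw [mem_closedBall] at this
    linarith [dist_nonneg (x := ak 0) (y := c)]
  have hmc : CauchySeq mk := by
    rw [Metric.cauchySeq_iff]
    intro ε hε
    set δ := (ε/2)^2 / (4*R+1) with hδ
    have hδ0 : 0 < δ := by positivity
    obtain ⟨N1, hN1⟩ := Metric.cauchySeq_iff.mp hak.cauchySeq δ hδ0
    obtain ⟨N2, hN2⟩ := Metric.cauchySeq_iff.mp hbk.cauchySeq δ hδ0
    refine ⟨max N1 N2, fun k hk j hj => ?_⟩
    have h1 := hN1 k (le_trans (le_max_left _ _) hk) j (le_trans (le_max_left _ _) hj)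
    have h2 := hN2 k (le_trans (le_max_right _ _) hk) j (le_trans (le_max_right _ _) hj)
    have hs1 : Real.sqrt (4 * R * dist (bk k) (bk j)) < ε/2 := by
      rw [Real.sqrt_lt' (by positivity)]
      have : 4 * R * dist (bk k) (bk j) ≤ 4 * R * δ := by
        apply mul_le_mul_of_nonneg_left h2.le (by positivity)
      have h3 : 4 * R * δ < (ε/2)^2 := by
        rw [hδ, ← mul_div_assoc, div_lt_iff₀ (by positivity : (0:ℝ) < 4*R+1)]
        have h5 : (0:ℝ) < (ε/2)^2 := by positivity
        nlinarith
      linarith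
    have hs2 : Real.sqrt (4 * R * dist (ak k) (ak j)) < ε/2 := by
      rw [Real.sqrt_lt' (by positivity)]
      have h6 : 4 * R * dist (ak k) (ak j) ≤ 4 * R * δ :=
        mul_le_mul_of_nonneg_left h1.le (by positivity)
      have h3 : 4 * R * δ < (ε/2)^2 := by
        rw [hδ, ← mul_div_assoc, div_lt_iff₀ (by positivity : (0:ℝ) < 4*R+1)]
        have h5 : (0:ℝ) < (ε/2)^2 := by positivity
        nlinarith
      linarith
    calc dist (mk k) (mk j) ≤ _ := hbound k j
      _ < ε/2 + ε/2 := add_lt_add hs1 hs2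
      _ = ε := by ring
  obtain ⟨m, hm⟩ := cauchySeq_tendsto_of_complete hmc
  refine ⟨m, ⟨?_, ?_⟩, ?_⟩
  · have h1 : Tendsto (fun k => dist (ak k) (mk k)) atTop (𝓝 (dist a m)) := hak.dist hm
    have h2 : Tendsto (fun k => dist (ak k) (bk k) / 2) atTop (𝓝 (dist a b / 2)) :=
      (hak.dist hbk).div_const 2
    have he : ∀ k, dist (ak k) (mk k) = dist (ak k) (bk k) / 2 := fun k => (hmk k).1
    refine tendsto_nhds_unique h1 ?_
    rw [tendsto_congr he]
    exact h2
  · have h1 : Tendsto (fun k => dist (bk k) (mk k)) atTop (𝓝 (dist b m)) := hbk.dist hm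
    have h2 : Tendsto (fun k => dist (ak k) (bk k) / 2) atTop (𝓝 (dist a b / 2)) :=
      (hak.dist hbk).div_const 2
    have he : ∀ k, dist (bk k) (mk k) = dist (ak k) (bk k) / 2 := fun k => (hmk k).2
    refine tendsto_nhds_unique h1 ?_
    rw [tendsto_congr he]
    exact h2
  · exact mem_closure_of_tendsto hm (Eventually.of_forall hmkS)

/-- iterated midpoint hull -/
noncomputable def hullIter (hX : IsCAT0 X) (S : Set X) : ℕ → Set X
  | 0 => S
  | (n+1) => hullIter hX S n ∪ Set.image2 (md hX) (hullIter hX S n) (hullIter hX S n)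

noncomputable def mdHull (hX : IsCAT0 X) (S : Set X) : Set X := ⋃ n, hullIter hX S n

theorem subset_mdHull (hX : IsCAT0 X) (S : Set X) : S ⊆ mdHull hX S :=
  subset_iUnion (hullIter hX S) 0

theorem hullIter_mono (hX : IsCAT0 X) (S : Set X) : Monotone (hullIter hX S) := by
  apply monotone_nat_of_le_succ
  intro n
  exact subset_union_left

theorem mdHull_midEx (hX : IsCAT0 X) (S : Set X) : MidEx (mdHull hX S) := by
  intro a ha b hb
  obtain ⟨_, ⟨n1, rfl⟩, ha1⟩ := ha
  obtain ⟨_, ⟨n2, rfl⟩, hb1⟩ := hb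
  have ha2 : a ∈ hullIter hX S (max n1 n2) := hullIter_mono hX S (le_max_left _ _) ha1
  have hb2 : b ∈ hullIter hX S (max n1 n2) := hullIter_mono hX S (le_max_right _ _) hb1
  refine ⟨md hX a b, md_spec hX a b, ?_⟩
  exact mem_iUnion.mpr ⟨max n1 n2 + 1, Or.inr (Set.mem_image2_of_mem ha2 hb2)⟩

theorem mdHull_countable (hX : IsCAT0 X) {S : Set X} (hS : S.Countable) :
    (mdHull hX S).Countable := by
  apply countable_iUnion
  intro n
  induction n with
  | zero => exact hS
  | succ n ih => exact ih.union (ih.image2 ih _)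

theorem mdHull_subset (hX : IsCAT0 X) {S T : Set X} (hT : MidEx T) (hST : S ⊆ T) :
    mdHull hX S ⊆ T := by
  apply iUnion_subset
  intro n
  induction n with
  | zero => exact hST
  | succ n ih =>
    rintro z (hz | hz)
    · exact ih hz
    · obtain ⟨p, hp, q, hq, rfl⟩ := hz
      obtain ⟨m, hm, hmT⟩ := hT p (ih hp) q (ih hq)
      rwa [midpoint_unique hX (md_spec hX p q) hm]

theorem mdHull_mono (hX : IsCAT0 X) {S T : Set X} (hST : S ⊆ T) :
    mdHull hX S ⊆ mdHull hX T := by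
  apply iUnion_subset
  intro n
  refine subset_trans ?_ (subset_iUnion (hullIter hX T) n)
  induction n with
  | zero => exact hST
  | succ n ih =>
    rintro z (hz | hz)
    · exact Or.inl (ih hz)
    · obtain ⟨p, hp, q, hq, rfl⟩ := hz
      exact Or.inr (Set.mem_image2_of_mem (ih hp) (ih hq))

theorem mdHull_iUnion_chain (hX : IsCAT0 X) {T : ℕ → Set X} (hT : Monotone T) :
    mdHull hX (⋃ k, T k) ⊆ ⋃ k, mdHull hX (T k) := by
  apply iUnion_subset
  intro n
  induction n with
  | zero =>
    intro z hz
    obtain ⟨_, ⟨k, rfl⟩, hk⟩ := hz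
    exact mem_iUnion.mpr ⟨k, subset_mdHull hX (T k) hk⟩
  | succ n ih =>
    rintro z (hz | hz)
    · exact ih hz
    · obtain ⟨p, hp, q, hq, rfl⟩ := hz
      obtain ⟨_, ⟨k1, rfl⟩, hk1⟩ := ih hp
      obtain ⟨_, ⟨k2, rfl⟩, hk2⟩ := ih hq
      have h1 : p ∈ mdHull hX (T (max k1 k2)) :=
        mdHull_mono hX (hT (le_max_left _ _)) hk1
      have h2 : q ∈ mdHull hX (T (max k1 k2)) :=
        mdHull_mono hX (hT (le_max_right _ _)) hk2
      obtain ⟨m, hm, hmH⟩ := mdHull_midEx hX (T (max k1 k2)) p h1 q h2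
      rw [midpoint_unique hX (md_spec hX p q) hm]
      exact mem_iUnion.mpr ⟨max k1 k2, hmH⟩

end CAT0P
namespace CAT0P
variable {X : Type*} [MetricSpace X]

theorem machine (hX : IsCAT0 X)
    (h2 : ∀ (c : X) (r : ℝ), @T2Space (closedBall c r)
      (TopologicalSpace.induced (Subtype.val : closedBall c r → X) (coconvexTopology X)))
    {x0 : X} {r : ℝ} {A' : Set X} (hA'K : A' ⊆ closedBall x0 r) (hA' : TdeltaClosed A')
    {x : X} (hxK : x ∈ closedBall x0 r)
    (hx : x ∈ @closure X (coconvexTopology X) A') : x ∈ A' := by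
  haveI : CompleteSpace X := hX.1
  set K := closedBall x0 r with hK
  have hKmid : MidEx K := midEx_closedBall hX x0 r
  have hKcl : IsClosed K := isClosed_closedBall
  -- the ultrafilter
  have hcp : @ClusterPt X (coconvexTopology X) x (𝓟 A') := (@mem_closure_iff_clusterPt X (coconvexTopology X) x A').mp hx
  haveI hne : (@nhds X (coconvexTopology X) x ⊓ 𝓟 A').NeBot := hcp
  set U : Ultrafilter X := Ultrafilter.of (@nhds X (coconvexTopology X) x ⊓ 𝓟 A') with hU
  have hUle : ↑U ≤ @nhds X (coconvexTopology X) x ⊓ 𝓟 A' := Ultrafilter.of_le _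
  have hUx : ↑U ≤ @nhds X (coconvexTopology X) x := hUle.trans inf_le_left
  have hUA : A' ∈ U := hUle (Filter.mem_inf_of_right (Filter.mem_principal_self A'))
  have hUK : K ∈ U := Filter.mem_of_superset hUA hA'K
  have hr : 0 ≤ r := by
    have := mem_closedBall.mp hxK
    linarith [dist_nonneg (x := x) (y := x0)]
  have hdK : ∀ z ∈ K, ∀ w ∈ K, dist z w ≤ 2*r := by
    intro z hz w hw
    rw [mem_closedBall] at hz hw
    calc dist z w ≤ dist z x0 + dist x0 w := dist_triangle _ _ _
      _ ≤ 2*r := by rw [dist_comm x0 w]; linarith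
  -- the functional f
  have hex : ∀ z : X, ∃ c : ℝ, Tendsto (fun w => dist z w ^ 2) (↑U) (𝓝 c) := by
    intro z
    set M := (dist z x0 + r)^2 with hM
    have hmem : (fun w => dist z w ^ 2) ⁻¹' (Icc 0 M) ∈ U := by
      filter_upwards [hUA] with w hw
      have hwK := hA'K hw
      rw [mem_closedBall] at hwK
      constructor
      · positivity
      · have h1 : dist z w ≤ dist z x0 + r := by
          have := dist_triangle z x0 w
          rw [dist_comm x0 w] at this
          linarith
        have h2 : 0 ≤ dist z x0 + r := by positivity
        simp only [hM]
        nlinarith [dist_nonneg (x := z) (y := w)]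
    have hcpt : IsCompact (Icc (0:ℝ) M) := isCompact_Icc
    obtain ⟨c, _, hc⟩ := hcpt.ultrafilter_le_nhds (U.map (fun w => dist z w ^ 2))
      (by rw [Ultrafilter.coe_map, le_principal_iff, mem_map]; exact hmem)
    refine ⟨c, ?_⟩
    rw [Filter.Tendsto]
    rw [Ultrafilter.coe_map] at hc
    exact hc
  choose f hf using hex
  have hf0 : ∀ z, 0 ≤ f z := by
    intro z
    exact le_of_tendsto_of_tendsto' tendsto_const_nhds (hf z) (fun w => by positivity)
  have hconv : ∀ a b m : X, IsMidpoint a b m →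
      f m ≤ f a / 2 + f b / 2 - dist a b ^ 2 / 4 := by
    intro a b m hm
    have hT : Tendsto (fun w => dist a w ^ 2 / 2 + dist b w ^ 2 / 2 - dist a b ^ 2 / 4) (↑U)
        (𝓝 (f a / 2 + f b / 2 - dist a b ^ 2 / 4)) :=
      Tendsto.sub (Tendsto.add ((hf a).div_const 2) ((hf b).div_const 2)) tendsto_const_nhds
    refine le_of_tendsto_of_tendsto' (hf m) hT (fun w => ?_)
    have := hX.2.2 a b w m hm
    rw [dist_comm w m, dist_comm w a, dist_comm w b] at this
    exact this
  have hfLip : ∀ z z' : X, f z ≤ f z' + (2*(dist z' x0 + r) + dist z z') * dist z z' := by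
    intro z z'
    have hT : Tendsto (fun w => dist z' w ^ 2 + (2*(dist z' x0 + r) + dist z z') * dist z z')
        (↑U) (𝓝 (f z' + (2*(dist z' x0 + r) + dist z z') * dist z z')) :=
      Tendsto.add (hf z') tendsto_const_nhds
    refine le_of_tendsto_of_tendsto (hf z) hT ?_
    filter_upwards [hUA] with w hw
    have hwK := hA'K hw
    rw [mem_closedBall] at hwK
    have h1 : dist z' w ≤ dist z' x0 + r := by
      have := dist_triangle z' x0 w
      rw [dist_comm x0 w] at this
      linarith
    have h2 : dist z w ≤ dist z' w + dist z z' := by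
      have := dist_triangle z z' w
      rw [dist_comm z z'] at this ⊢
      linarith
    have h3 : 0 ≤ dist z w := dist_nonneg
    nlinarith [dist_nonneg (x := z) (y := z'), dist_nonneg (x := z') (y := w)]
  have hfc : Continuous f := by
    rw [Metric.continuous_iff]
    intro z' ε hε
    obtain ⟨C, hC0, hCge⟩ : ∃ C : ℝ, 0 < C ∧ 2*(dist z' x0 + r) + 3 ≤ C :=
      ⟨2*(dist z' x0 + r) + 3, by positivity, le_refl _⟩
    refine ⟨min 1 (ε/(2*C)), by positivity, fun z hz => ?_⟩
    have hd1 : dist z z' < 1 := lt_of_lt_of_le hz (min_le_left _ _)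
    have hd2 : dist z z' < ε/(2*C) := lt_of_lt_of_le hz (min_le_right _ _)
    have hzx0 : dist z x0 ≤ dist z' x0 + 1 := by
      have := dist_triangle z z' x0
      linarith
    have e1 : f z ≤ f z' + C * dist z z' := by
      have := hfLip z z'
      have hmul : (2*(dist z' x0 + r) + dist z z') * dist z z' ≤ C * dist z z' := by
        apply mul_le_mul_of_nonneg_right _ dist_nonneg
        linarith
      linarith
    have e2 : f z' ≤ f z + C * dist z z' := by
      have := hfLip z' z
      rw [dist_comm z' z] at this
      have hmul : (2*(dist z x0 + r) + dist z z') * dist z z' ≤ C * dist z z' := by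
        apply mul_le_mul_of_nonneg_right _ dist_nonneg
        linarith
      linarith
    rw [Real.dist_eq, abs_lt]
    have hCd : C * dist z z' < ε/2 := by
      rcases eq_or_lt_of_le (dist_nonneg (x := z) (y := z')) with h | h
      · rw [← h]; simpa using (by positivity : (0:ℝ) < ε/2)
      · calc C * dist z z' < C * (ε/(2*C)) := by
              exact mul_lt_mul_of_pos_left hd2 hC0
          _ = ε/2 := by field_simp
    constructor <;> linarith
  -- minimizer over K
  obtain ⟨y, hyK, hymin⟩ := min_exists hX ⟨x, hxK⟩ hKcl hKmid hfc (fun z _ => hf0 z)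
    (fun a _ b _ m hm => hconv a b m hm)
  -- U1 : closed MidEx sets in U contain y
  have hU1 : ∀ C : Set X, IsClosed C → MidEx C → C ∈ U → y ∈ C := by
    intro C hCcl hCmid hCU
    have hCK : (C ∩ K) ∈ U := Filter.inter_mem hCU hUK
    have hCKne : (C ∩ K).Nonempty := Ultrafilter.nonempty_of_mem hCK
    have hCKcl : IsClosed (C ∩ K) := hCcl.inter hKcl
    have hCKmid : MidEx (C ∩ K) := midEx_inter hX hCmid hKmid
    obtain ⟨p, hp⟩ := exists_nearest hX hCKne hCKcl hCKmid y
    have hobt := nearest_obtuse hX hCKmid hp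
    have hest : f p + dist y p ^ 2 ≤ f y := by
      have hT : Tendsto (fun w => dist p w ^ 2 + dist y p ^ 2) (↑U)
          (𝓝 (f p + dist y p ^ 2)) := Tendsto.add (hf p) tendsto_const_nhds
      refine le_of_tendsto_of_tendsto hT (hf y) ?_
      filter_upwards [hCK] with w hw
      have := hobt w hw
      linarith
    have hyp : f y ≤ f p := hymin p hp.1.2
    have hd0 : dist y p ^ 2 ≤ 0 := by linarith
    have : y = p := by
      rw [← dist_eq_zero]
      nlinarith [dist_nonneg (x := y) (y := p)]
    rw [this]
    exact hp.1.1
  have hyK' : y ∈ K := hyK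
  -- U converges to y in tco
  have hUy : ↑U ≤ @nhds X (coconvexTopology X) y := by
    rw [coconvexTopology, TopologicalSpace.nhds_generateFrom]
    refine le_iInf₂ ?_
    rintro s ⟨hys, C, hCcl, hCconv, rfl⟩
    rw [le_principal_iff]
    by_contra hns
    have hCU : C ∈ U := by
      rcases Ultrafilter.mem_or_compl_mem U C with h | h
      · exact h
      · exact absurd h hns
    exact hys (hU1 C hCcl (GeodesicallyConvex.midEx hX hCconv) hCU)
  -- Hausdorff: x = y
  have hxy : x = y := by
    by_contra hxy
    haveI hT2 := h2 x0 r
    have hne2 : (⟨x, hxK⟩ : closedBall x0 r) ≠ ⟨y, hyK'⟩ := by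
      simp only [ne_eq, Subtype.mk.injEq]
      exact hxy
    obtain ⟨u, v, hu, hv, hxu, hyv, huv⟩ :=
      @t2_separation _ (TopologicalSpace.induced (Subtype.val : closedBall x0 r → X) (coconvexTopology X))
        hT2 _ _ hne2
    rw [@isOpen_induced_iff _ _ (coconvexTopology X)] at hu hv
    obtain ⟨U1, hU1o, hU1e⟩ := hu
    obtain ⟨V1, hV1o, hV1e⟩ := hv
    have hxU1 : x ∈ U1 := by
      have : (⟨x, hxK⟩ : closedBall x0 r) ∈ u := hxu
      rw [← hU1e] at this
      exact this
    have hyV1 : y ∈ V1 := by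
      have : (⟨y, hyK'⟩ : closedBall x0 r) ∈ v := hyv
      rw [← hV1e] at this
      exact this
    have hU1n : U1 ∈ @nhds X (coconvexTopology X) x := by
      letI : TopologicalSpace X := coconvexTopology X
      exact hU1o.mem_nhds hxU1
    have hV1n : V1 ∈ @nhds X (coconvexTopology X) y := by
      letI : TopologicalSpace X := coconvexTopology X
      exact hV1o.mem_nhds hyV1
    have hU1U : U1 ∈ U := hUx hU1n
    have hV1U : V1 ∈ U := hUy hV1n
    have hint : (U1 ∩ V1 ∩ K).Nonempty :=
      Ultrafilter.nonempty_of_mem (Filter.inter_mem (Filter.inter_mem hU1U hV1U) hUK)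
    obtain ⟨w, ⟨hwU1, hwV1⟩, hwK⟩ := hint
    have hwu : (⟨w, hwK⟩ : closedBall x0 r) ∈ u := by rw [← hU1e]; exact hwU1
    have hwv : (⟨w, hwK⟩ : closedBall x0 r) ∈ v := by rw [← hV1e]; exact hwV1
    exact (Set.disjoint_iff.mp huv ⟨hwu, hwv⟩)
  have hxmin : ∀ q ∈ K, f x ≤ f q := by rw [hxy]; exact hymin
  -- enumerations of countable hulls
  have hsel : ∀ l : List X, ∃ e : ℕ → X,
      mdHull hX ({x} ∪ {z | z ∈ l}) ⊆ range e ∧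
      ∀ i, e i ∈ mdHull hX ({x} ∪ {z | z ∈ l}) := by
    intro l
    have hc : (mdHull hX ({x} ∪ {z | z ∈ l})).Countable :=
      mdHull_countable hX ((countable_singleton x).union l.finite_toSet.countable)
    have hnem : (mdHull hX ({x} ∪ {z | z ∈ l})).Nonempty :=
      ⟨x, subset_mdHull hX _ (Or.inl rfl)⟩
    obtain ⟨e, he⟩ := hc.exists_eq_range hnem
    exact ⟨e, by rw [he], fun i => by rw [he]; exact mem_range_self i⟩
  choose enum henum1 _henum2 using hsel
  -- choosing points from the ultrafilter
  have hCon : ∀ l : List X, ∃ w, w ∈ A' ∧ ∀ k ≤ l.length, ∀ i ≤ l.length,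
      |dist (enum (l.take k) i) w ^ 2 - f (enum (l.take k) i)| < 1/(l.length+1) := by
    intro l
    set n := l.length with hn
    have hsingle : ∀ z : X, {w : X | |dist z w ^ 2 - f z| < 1/(n+1)} ∈ U := by
      intro z
      have hpos : (0:ℝ) < 1/(n+1) := by positivity
      have hball := Filter.mem_map.mp ((hf z) (Metric.ball_mem_nhds (f z) hpos))
      refine Filter.mem_of_superset hball ?_
      intro w hw
      simp only [Set.mem_preimage, Metric.mem_ball, Real.dist_eq] at hw
      exact hw
    have hmemU : (A' ∩ ⋂ k ∈ Finset.range (n+1), ⋂ i ∈ Finset.range (n+1),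
        {w : X | |dist (enum (l.take k) i) w ^ 2 - f (enum (l.take k) i)| < 1/(n+1)}) ∈ U := by
      refine Filter.inter_mem hUA ?_
      refine (Filter.biInter_finset_mem _).mpr (fun k _ => ?_)
      refine (Filter.biInter_finset_mem _).mpr (fun i _ => ?_)
      exact hsingle _
    obtain ⟨w, hwA, hwI⟩ := Ultrafilter.nonempty_of_mem hmemU
    refine ⟨w, hwA, fun k hk i hi => ?_⟩
    have h1 := Set.mem_iInter₂.mp hwI k (Finset.mem_range.mpr (by omega))
    have h2 := Set.mem_iInter₂.mp h1 i (Finset.mem_range.mpr (by omega))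
    exact h2
  choose pick hpickA hpickI using hCon
  obtain ⟨LL, hLL0, hLLsucc⟩ :
      ∃ LL : ℕ → List X, LL 0 = [] ∧ ∀ n, LL (n+1) = LL n ++ [pick (LL n)] :=
    ⟨fun n => Nat.rec ([] : List X) (fun _ l => l ++ [pick l]) n, rfl, fun _ => rfl⟩
  obtain ⟨a, ha⟩ : ∃ a : ℕ → X, ∀ n, a n = pick (LL n) := ⟨_, fun _ => rfl⟩
  have haA : ∀ n, a n ∈ A' := fun n => (ha n) ▸ hpickA (LL n)
  have haK : ∀ n, a n ∈ K := fun n => hA'K (haA n)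
  have hLLlen : ∀ n, (LL n).length = n := by
    intro n
    induction n with
    | zero => rw [hLL0]; rfl
    | succ n ih => rw [hLLsucc, List.length_append, ih, List.length_singleton]
  have hLLtake : ∀ k n, k ≤ n → (LL n).take k = LL k := by
    intro k n hk
    induction n with
    | zero =>
      have : k = 0 := by omega
      subst this
      rw [hLL0]
      rfl
    | succ n ih =>
      rcases Nat.lt_or_ge k (n+1) with h | h
      · have hk' : k ≤ n := by omega
        rw [hLLsucc, List.take_append_of_le_length (by rw [hLLlen]; exact hk')]
        exact ih hk'
      · have : k = n + 1 := by omega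
        subst this
        have h1 := List.take_length (l := LL (n+1))
        rw [hLLlen (n+1)] at h1
        exact h1
  have hmemLL : ∀ n z, z ∈ LL n ↔ ∃ i, i < n ∧ a i = z := by
    intro n
    induction n with
    | zero => intro z; simp [hLL0]
    | succ n ih =>
      intro z
      rw [hLLsucc, List.mem_append]
      constructor
      · rintro (h | h)
        · obtain ⟨i, hi, rfl⟩ := (ih z).mp h
          exact ⟨i, by omega, rfl⟩
        · rw [List.mem_singleton] at h
          exact ⟨n, by omega, by rw [ha n, h]⟩
      · rintro ⟨i, hi, rfl⟩
        rcases Nat.lt_or_ge i n with h | h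
        · exact Or.inl ((ih (a i)).mpr ⟨i, h, rfl⟩)
        · have : i = n := by omega
          subst this
          exact Or.inr (List.mem_singleton.mpr (ha i))
  have hcons : ∀ k i n : ℕ, k ≤ n → i ≤ n →
      |dist (enum (LL k) i) (a n) ^ 2 - f (enum (LL k) i)| < 1/(n+1) := by
    intro k i n hk hi
    have h1 := hpickI (LL n) k (by rw [hLLlen n]; exact hk) i (by rw [hLLlen n]; exact hi)
    rw [hLLtake k n hk, hLLlen n] at h1
    rw [ha n]
    exact h1
  -- limits on the hull
  set T : ℕ → Set X := fun k => {x} ∪ {z | z ∈ LL k} with hT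
  have hTmono : Monotone T := by
    apply monotone_nat_of_le_succ
    intro k
    rintro z (rfl | hz)
    · exact Or.inl rfl
    · right
      rw [hLLsucc]
      exact List.mem_append_left _ hz
  have hTunion : ({x} ∪ range a : Set X) = ⋃ k, T k := by
    ext z
    constructor
    · rintro (rfl | ⟨i, rfl⟩)
      · exact mem_iUnion.mpr ⟨0, Or.inl rfl⟩
      · exact mem_iUnion.mpr ⟨i+1, Or.inr ((hmemLL (i+1) (a i)).mpr ⟨i, by omega, rfl⟩)⟩
    · rintro hz
      obtain ⟨k, hk⟩ := mem_iUnion.mp hz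
      rcases hk with rfl | hz'
      · exact Or.inl rfl
      · obtain ⟨i, _, rfl⟩ := (hmemLL k z).mp hz'
        exact Or.inr (mem_range_self i)
  have hlimhull : ∀ z ∈ mdHull hX ({x} ∪ range a),
      Tendsto (fun n => dist z (a n) ^ 2) atTop (𝓝 (f z)) := by
    intro z hz
    rw [hTunion] at hz
    obtain ⟨s, ⟨k0, rfl⟩, hk0⟩ := mdHull_iUnion_chain hX hTmono hz
    have hk0' : z ∈ mdHull hX ({x} ∪ {w | w ∈ LL k0}) := hk0
    obtain ⟨i0, hi0⟩ := mem_range.mp (henum1 (LL k0) hk0')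
    rw [Metric.tendsto_atTop]
    intro ε hε
    obtain ⟨N, hN⟩ := exists_nat_gt (1/ε)
    refine ⟨max (max k0 i0) N, fun n hn => ?_⟩
    have hkn : k0 ≤ n := le_trans (le_trans (le_max_left _ _) (le_max_left _ _)) hn
    have hin : i0 ≤ n := le_trans (le_trans (le_max_right _ _) (le_max_left _ _)) hn
    have h1 := hcons k0 i0 n hkn hin
    rw [hi0] at h1
    have hNn : (N:ℝ) ≤ n := Nat.cast_le.mpr (le_trans (le_max_right _ _) hn)
    have h2 : 1/((n:ℝ)+1) < ε := by
      rw [div_lt_iff₀ (by positivity : (0:ℝ) < (n:ℝ)+1)]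
      have h3 : 1/ε < (n:ℝ) + 1 := by linarith
      rw [div_lt_iff₀ hε] at h3
      linarith [mul_comm ε ((n:ℝ)+1)]
    rw [Real.dist_eq]
    linarith
  -- Q
  set Q := closure (mdHull hX ({x} ∪ range a)) with hQ
  have hhullK : mdHull hX ({x} ∪ range a) ⊆ K := by
    apply mdHull_subset hX hKmid
    rintro z (rfl | ⟨i, rfl⟩)
    · exact hxK
    · exact haK i
  have hQK : Q ⊆ K := closure_minimal hhullK hKcl
  have hQmid : MidEx Q := midEx_closure hX hhullK (mdHull_midEx hX _)
  have hQcl : IsClosed Q := isClosed_closure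
  have hxQ : x ∈ Q := subset_closure (subset_mdHull hX _ (Or.inl rfl))
  have hQne : Q.Nonempty := ⟨x, hxQ⟩
  have haQ : ∀ n, a n ∈ Q :=
    fun n => subset_closure (subset_mdHull hX _ (Or.inr (mem_range_self n)))
  have hlimQ : ∀ z ∈ Q, Tendsto (fun n => dist z (a n) ^ 2) atTop (𝓝 (f z)) := by
    intro z hz
    have hzK : z ∈ K := hQK hz
    rw [Metric.tendsto_atTop]
    intro ε hε
    have hδ0 : (0:ℝ) < min 1 (ε / (3 * (4*r + 1))) := by positivity
    obtain ⟨z', hz'h, hz'd⟩ := Metric.mem_closure_iff.mp hz _ hδ0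
    have hz'K : z' ∈ K := hhullK hz'h
    have hd1 : dist z z' < 1 := lt_of_lt_of_le hz'd (min_le_left _ _)
    have hd2 : dist z z' < ε / (3 * (4*r + 1)) := lt_of_lt_of_le hz'd (min_le_right _ _)
    obtain ⟨N, hN⟩ := Metric.tendsto_atTop.mp (hlimhull z' hz'h) (ε/3) (by positivity)
    refine ⟨N, fun n hn => ?_⟩
    have h1 := hN n hn
    rw [Real.dist_eq] at h1 ⊢
    have hzx0 : dist z x0 ≤ r := mem_closedBall.mp hzK
    have hz'x0 : dist z' x0 ≤ r := mem_closedBall.mp hz'K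
    have hanK : dist (a n) x0 ≤ r := mem_closedBall.mp (haK n)
    have hda : dist z (a n) ≤ 2*r := hdK z hzK _ (haK n)
    have hda' : dist z' (a n) ≤ 2*r := hdK z' hz'K _ (haK n)
    have htri1 : dist z (a n) ≤ dist z' (a n) + dist z z' := by
      have := dist_triangle z z' (a n)
      rw [dist_comm z z'] at this ⊢
      linarith
    have htri2 : dist z' (a n) ≤ dist z (a n) + dist z z' := by
      have := dist_triangle z' z (a n)
      rw [dist_comm z' z] at this
      linarith
    have hsq : |dist z (a n)^2 - dist z' (a n)^2| ≤ (4*r) * dist z z' := by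
      rw [abs_le]
      constructor <;> nlinarith [dist_nonneg (x := z) (y := a n),
        dist_nonneg (x := z') (y := a n), dist_nonneg (x := z) (y := z')]
    have hfz : |f z - f z'| ≤ (4*r + 1) * dist z z' := by
      have e1 := hfLip z z'
      have e2 := hfLip z' z
      rw [dist_comm z' z] at e2
      have hm1 : (2*(dist z' x0 + r) + dist z z') * dist z z' ≤ (4*r+1) * dist z z' :=
        mul_le_mul_of_nonneg_right (by linarith) dist_nonneg
      have hm2 : (2*(dist z x0 + r) + dist z z') * dist z z' ≤ (4*r+1) * dist z z' :=
        mul_le_mul_of_nonneg_right (by linarith) dist_nonneg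
      rw [abs_le]
      constructor <;> linarith
    have hbnd : (4*r+1) * dist z z' < ε/3 := by
      have := mul_lt_mul_of_pos_left hd2 (by positivity : (0:ℝ) < 4*r+1)
      calc (4*r+1) * dist z z' < (4*r+1) * (ε / (3 * (4*r + 1))) := this
        _ = ε/3 := by field_simp
    have hbnd2 : (4*r) * dist z z' ≤ (4*r+1) * dist z z' :=
      mul_le_mul_of_nonneg_right (by linarith) dist_nonneg
    have habs1 := abs_sub_abs_le_abs_sub (dist z (a n)^2 - f z) 0
    calc |dist z (a n)^2 - f z|
        ≤ |dist z (a n)^2 - dist z' (a n)^2| + |dist z' (a n)^2 - f z'| + |f z' - f z| := by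
          have := abs_add_le (dist z (a n)^2 - dist z' (a n)^2) (dist z' (a n)^2 - f z')
          have h2 := abs_add_le (dist z (a n)^2 - f z') (f z' - f z)
          have h3 : dist z (a n)^2 - f z = (dist z (a n)^2 - f z') + (f z' - f z) := by ring
          have h4 : dist z (a n)^2 - f z' = (dist z (a n)^2 - dist z' (a n)^2) + (dist z' (a n)^2 - f z') := by ring
          calc |dist z (a n)^2 - f z| = |(dist z (a n)^2 - f z') + (f z' - f z)| := by rw [← h3]
            _ ≤ |dist z (a n)^2 - f z'| + |f z' - f z| := abs_add_le _ _
            _ ≤ |dist z (a n)^2 - dist z' (a n)^2| + |dist z' (a n)^2 - f z'| + |f z' - f z| := by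
                have : |dist z (a n)^2 - f z'| ≤ |dist z (a n)^2 - dist z' (a n)^2| + |dist z' (a n)^2 - f z'| := by
                  rw [h4]; exact abs_add_le _ _
                linarith
      _ < ε := by
          have h5 : |f z' - f z| ≤ (4*r+1) * dist z z' := by rw [abs_sub_comm]; exact hfz
          have h6 : |dist z (a n)^2 - dist z' (a n)^2| < ε/3 := lt_of_le_of_lt (le_trans hsq hbnd2) hbnd
          have h7 : |f z' - f z| < ε/3 := lt_of_le_of_lt h5 hbnd
          linarith
  -- final : weak convergence of a to x
  have hwc : WeakConv a x := by
    intro G hG p hp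
    by_contra hnot
    rw [Metric.tendsto_atTop] at hnot
    push_neg at hnot
    obtain ⟨ε, hε, hfreq⟩ := hnot
    have hfreq' : ∃ᶠ n in atTop, ε ≤ dist (p n) x := by
      rw [Filter.frequently_atTop]
      intro N
      obtain ⟨n, hn1, hn2⟩ := hfreq N
      exact ⟨n, hn1, hn2⟩
    obtain ⟨φ, hφ, hφP⟩ := extraction_of_frequently_atTop hfreq'
    have hGc := segFrom_compact hG
    have hpG : ∀ n, p n ∈ G := fun n => (hp n).1
    obtain ⟨qs, hqsG, ψ, hψ, hψt⟩ := hGc.tendsto_subseq (fun k => hpG (φ k))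
    have hθmono : StrictMono (fun k => φ (ψ k)) := hφ.comp hψ
    have hqsx : ε ≤ dist qs x := by
      have hT : Tendsto (fun k => dist (p (φ (ψ k))) x) atTop (𝓝 (dist qs x)) :=
        hψt.dist tendsto_const_nhds
      exact le_of_tendsto_of_tendsto' tendsto_const_nhds hT (fun k => hφP (ψ k))
    obtain ⟨rG, hrG⟩ := hGc.isBounded.subset_closedBall x0
    have hbdd : ∀ k, dist (a (φ (ψ k))) (p (φ (ψ k))) ∈ Icc (0:ℝ) (r + rG) := by
      intro k
      refine ⟨dist_nonneg, ?_⟩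
      have h1 : dist (a (φ (ψ k))) x0 ≤ r := mem_closedBall.mp (haK _)
      have h2 : dist (p (φ (ψ k))) x0 ≤ rG := mem_closedBall.mp (hrG (hpG _))
      calc dist (a (φ (ψ k))) (p (φ (ψ k)))
          ≤ dist (a (φ (ψ k))) x0 + dist x0 (p (φ (ψ k))) := dist_triangle _ _ _
        _ ≤ r + rG := by rw [dist_comm x0]; linarith
    obtain ⟨ℓ, _, χ, hχ, hχt⟩ :=
      (isCompact_Icc (a := (0:ℝ)) (b := r + rG)).tendsto_subseq hbdd
    set θ : ℕ → ℕ := fun j => φ (ψ (χ j)) with hθ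
    have hθm : StrictMono θ := hθmono.comp hχ
    obtain ⟨q', hq'⟩ := exists_nearest hX hQne hQcl hQmid qs
    have hobtQ := nearest_obtuse hX hQmid hq'
    have hLx : Tendsto (fun j => dist x (a (θ j)) ^ 2) atTop (𝓝 (f x)) :=
      (hlimQ x hxQ).comp hθm.tendsto_atTop
    have hLq' : Tendsto (fun j => dist q' (a (θ j)) ^ 2) atTop (𝓝 (f q')) :=
      (hlimQ q' hq'.1).comp hθm.tendsto_atTop
    have hPt : Tendsto (fun j => p (θ j)) atTop (𝓝 qs) := hψt.comp hχ.tendsto_atTop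
    have hLP : Tendsto (fun j => dist (p (θ j)) x) atTop (𝓝 (dist qs x)) :=
      hPt.dist tendsto_const_nhds
    have hLPq : Tendsto (fun j => dist (p (θ j)) qs) atTop (𝓝 0) := by
      have := hPt.dist (tendsto_const_nhds (x := qs))
      simpa using this
    have hLBP : Tendsto (fun j => dist (a (θ j)) (p (θ j))) atTop (𝓝 ℓ) := hχt
    have hineq1 : ℓ^2 + dist qs x ^ 2 ≤ f x := by
      have hT1 : Tendsto (fun j => dist (a (θ j)) (p (θ j)) ^2 + dist (p (θ j)) x ^2) atTop
          (𝓝 (ℓ^2 + dist qs x^2)) := (hLBP.pow 2).add (hLP.pow 2)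
      refine le_of_tendsto_of_tendsto' hT1 hLx (fun j => ?_)
      have h1 := nearest_obtuse hX (segFrom_midEx hG) (hp (θ j)) x (segFrom_mem hG)
      rw [dist_comm x (a (θ j))]
      exact h1
    have hineq2 : Real.sqrt (f q') ≤ ℓ := by
      have hT2 : Tendsto (fun j => dist q' (a (θ j))) atTop (𝓝 (Real.sqrt (f q'))) := by
        have h1 : Tendsto (fun j => Real.sqrt (dist q' (a (θ j)) ^2)) atTop
            (𝓝 (Real.sqrt (f q'))) := (Real.continuous_sqrt.tendsto _).comp hLq'
        exact Tendsto.congr (fun j => Real.sqrt_sq dist_nonneg) h1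
      have hT3 : Tendsto (fun j => dist (a (θ j)) (p (θ j)) + dist (p (θ j)) qs) atTop
          (𝓝 (ℓ + 0)) := hLBP.add hLPq
      have h4 : Real.sqrt (f q') ≤ ℓ + 0 := by
        refine le_of_tendsto_of_tendsto' hT2 hT3 (fun j => ?_)
        have e1 := hobtQ (a (θ j)) (haQ _)
        have e2 : dist q' (a (θ j)) ≤ dist qs (a (θ j)) := by
          nlinarith [dist_nonneg (x := q') (y := a (θ j)), dist_nonneg (x := qs) (y := a (θ j)),
            dist_nonneg (x := qs) (y := q')]
        have e3 : dist qs (a (θ j)) ≤ dist qs (p (θ j)) + dist (p (θ j)) (a (θ j)) :=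
          dist_triangle _ _ _
        have c1 : dist (p (θ j)) qs = dist qs (p (θ j)) := dist_comm _ _
        have c2 : dist (p (θ j)) (a (θ j)) = dist (a (θ j)) (p (θ j)) := dist_comm _ _
        linarith
      simpa using h4
    have h5 : f q' ≤ ℓ^2 := by
      have h6 := pow_le_pow_left₀ (Real.sqrt_nonneg (f q')) hineq2 2
      rwa [Real.sq_sqrt (hf0 q')] at h6
    have h6 : f x ≤ f q' := hxmin q' (hQK hq'.1)
    have h7 : ε^2 ≤ dist qs x^2 := pow_le_pow_left₀ hε.le hqsx 2
    have h8 : 0 < ε^2 := by positivity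
    linarith
  exact hA' a haA
    (isBounded_closedBall.subset (range_subset_iff.mpr haK)) x hwc


end CAT0P

/-- If on every closed ball of a CAT(0) space the coconvex
topology `T_co` is Hausdorff, then `T_co` and `T_Δ` coincide on all bounded
subsets. -/
theorem coconvex_eq_weak_on_bounded_of_hausdorff_on_balls
    (X : Type*) [MetricSpace X] (hX : IsCAT0 X)
    (TΔ : TopologicalSpace X) (hTΔ : IsWeakTopology TΔ)
    (h : ∀ (x : X) (r : ℝ),
        @T2Space (Metric.closedBall x r)
          (TopologicalSpace.induced (Subtype.val : Metric.closedBall x r → X)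
            (coconvexTopology X))) :
    ∀ B : Set X, Bornology.IsBounded B →
      TopologicalSpace.induced (Subtype.val : B → X) (coconvexTopology X) =
        TopologicalSpace.induced (Subtype.val : B → X) TΔ := by
  intro B hB
  rcases B.eq_empty_or_nonempty with rfl | ⟨x0, hx0⟩
  · haveI : IsEmpty (↥(∅ : Set X)) := ⟨fun x => x.2⟩
    refine TopologicalSpace.ext_iff.mpr (fun s => ?_)
    have hs : s = ∅ := Set.eq_empty_of_isEmpty s
    subst hs
    exact iff_of_true
      (@isOpen_empty _ (TopologicalSpace.induced Subtype.val (coconvexTopology X)))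
      (@isOpen_empty _ (TopologicalSpace.induced Subtype.val TΔ))
  obtain ⟨r, hBr⟩ := hB.subset_closedBall x0
  set K := Metric.closedBall x0 r with hK
  -- direction (i) : TΔ is finer than the coconvex topology
  have hdir1 : TΔ ≤ coconvexTopology X := by
    rw [coconvexTopology, TopologicalSpace.le_generateFrom_iff_subset_isOpen]
    rintro s ⟨C, hCcl, hCconv, rfl⟩
    have htd : TdeltaClosed C :=
      CAT0P.tdeltaClosed_of_closed_midEx hX hCcl (CAT0P.GeodesicallyConvex.midEx hX hCconv)
    have hc : @IsClosed X TΔ C := (hTΔ C).mpr htd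
    exact (@isOpen_compl_iff X C TΔ).mpr hc
  -- key : closure points in B of TdeltaClosed sets
  have hkey : ∀ A : Set X, TdeltaClosed A →
      ∀ b, b ∈ B → b ∈ @closure X (coconvexTopology X) (A ∩ K) → b ∈ A := by
    intro A hA b hbB hbcl
    have hA' : TdeltaClosed (A ∩ K) := by
      intro u hu hbd z hw
      refine ⟨hA u (fun n => (hu n).1) hbd z hw, ?_⟩
      exact CAT0P.tdeltaClosed_of_closed_midEx hX Metric.isClosed_closedBall
        (CAT0P.midEx_closedBall hX x0 r) u (fun n => (hu n).2) hbd z hw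
    exact (CAT0P.machine hX h Set.inter_subset_right hA' (hBr hbB) hbcl).1
  apply le_antisymm
  · -- induced coco ≤ induced TΔ
    rw [TopologicalSpace.le_def]
    intro s hs
    rw [@isOpen_induced_iff _ _ TΔ] at hs
    obtain ⟨V, hVopen, hVeq⟩ := hs
    have hVc : TdeltaClosed Vᶜ := (hTΔ Vᶜ).mp ((@isClosed_compl_iff X TΔ V).mpr hVopen)
    set C0 := @closure X (coconvexTopology X) (Vᶜ ∩ K) with hC0
    have hseq : s = ((Subtype.val : B → X) ⁻¹' C0)ᶜ := by
      rw [← hVeq]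
      ext b
      simp only [Set.mem_preimage, Set.mem_compl_iff]
      constructor
      · intro hbV hbC0
        exact (hkey Vᶜ hVc b.1 b.2 hbC0) hbV
      · intro hbC0
        by_contra hbV
        apply hbC0
        have hbK : (b : X) ∈ K := hBr b.2
        have : (b : X) ∈ Vᶜ ∩ K := ⟨hbV, hbK⟩
        revert this
        rw [hC0]
        letI : TopologicalSpace X := coconvexTopology X
        exact fun hh => subset_closure hh
    have hclosed : @IsClosed ↥B
        (TopologicalSpace.induced (Subtype.val : B → X) (coconvexTopology X))
        ((Subtype.val : B → X) ⁻¹' C0) := by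
      letI : TopologicalSpace X := coconvexTopology X
      letI : TopologicalSpace ↥B := TopologicalSpace.induced (Subtype.val : B → X)
        (coconvexTopology X)
      exact IsClosed.preimage continuous_induced_dom isClosed_closure
    rw [hseq]
    exact hclosed.isOpen_compl
  · exact induced_mono hdir1
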